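/- Let X be a skew brace with operations x ▷ y = y^∘ ∘ (x * y) and x ◁ y = y^∘ ∘ (y * x). Then for all x, y, z ∈ X the first exchange law holds: (x ▷ y) ▷ (z ▷ y) = (x ▷ z) ▷ (y ◁ z). -/
import Mathlib


structure SkewBrace (X : Type*) where
  circ : X → X → X
  cinv : X → X
  ce : X
  star : X → X → X
  sinv : X → X
  se : X
  circ_assoc : ∀ a b c, circ (circ a b) c = circ a (circ b c)
  ce_circ : ∀ a, circ ce a = a
  circ_ce : ∀ a, circ a ce = a
  cinv_circ : ∀ a, circ (cinv a) a = ce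
  circ_cinv : ∀ a, circ a (cinv a) = ce
  star_assoc : ∀ a b c, star (star a b) c = star a (star b c)
  se_star : ∀ a, star se a = a
  star_se : ∀ a, star a se = a
  sinv_star : ∀ a, star (sinv a) a = se
  star_sinv : ∀ a, star a (sinv a) = se
  distrib : ∀ x y z, circ x (star y z) = star (star (circ x y) (sinv x)) (circ x z)

def SkewBrace.tri {X : Type*} (B : SkewBrace X) (x y : X) : X :=
  B.circ (B.cinv y) (B.star x y)

def SkewBrace.ov {X : Type*} (B : SkewBrace X) (x y : X) : X :=
  B.circ (B.cinv y) (B.star y x)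

def SkewBrace.triInv {X : Type*} (B : SkewBrace X) (x y : X) : X :=
  B.star (B.circ y x) (B.sinv y)

def SkewBrace.ovInv {X : Type*} (B : SkewBrace X) (x y : X) : X :=
  B.star (B.sinv y) (B.circ y x)

namespace SkewBrace

variable {X : Type*} (B : SkewBrace X)

lemma sinv_star' (a c : X) : B.star (B.sinv a) (B.star a c) = c := by
  rw [← B.star_assoc, B.sinv_star, B.se_star]

lemma star_sinv' (a c : X) : B.star a (B.star (B.sinv a) c) = c := by
  rw [← B.star_assoc, B.star_sinv, B.se_star]

lemma inv_right (a c : X) (h : B.star a c = B.se) : c = B.sinv a := by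
  rw [← B.sinv_star' a c, h, B.star_se]

lemma sinv_sinv (a : X) : B.sinv (B.sinv a) = a := by
  have h : B.star (B.sinv a) a = B.se := B.sinv_star a
  exact (B.inv_right _ _ h).symm

lemma sinv_star_rev (a b : X) : B.sinv (B.star a b) = B.star (B.sinv b) (B.sinv a) := by
  refine (B.inv_right _ _ ?_).symm
  rw [B.star_assoc, ← B.star_assoc b, B.star_sinv, B.se_star, B.star_sinv]

lemma cinv_circ' (a c : X) : B.circ (B.cinv a) (B.circ a c) = c := by
  rw [← B.circ_assoc, B.cinv_circ, B.ce_circ]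

lemma circ_cinv' (a c : X) : B.circ a (B.circ (B.cinv a) c) = c := by
  rw [← B.circ_assoc, B.circ_cinv, B.ce_circ]

lemma cinv_right (a c : X) (h : B.circ a c = B.ce) : c = B.cinv a := by
  rw [← B.cinv_circ' a c, h, B.circ_ce]

lemma cinv_cinv (a : X) : B.cinv (B.cinv a) = a := by
  exact (B.cinv_right _ _ (B.cinv_circ a)).symm

lemma cinv_circ_rev (a b : X) : B.cinv (B.circ a b) = B.circ (B.cinv b) (B.cinv a) := by
  refine (B.cinv_right _ _ ?_).symm
  rw [B.circ_assoc, ← B.circ_assoc b, B.circ_cinv, B.ce_circ, B.circ_cinv]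

lemma circ_se (a : X) : B.circ a B.se = a := by
  have h := B.distrib a B.se B.se
  rw [B.se_star] at h
  set u := B.circ a B.se with hu
  have h2 : B.star (B.sinv a) u = B.se := by
    have h3 : B.star (B.sinv u) u = B.star (B.sinv u) (B.star (B.star u (B.sinv a)) u) := by
      rw [← h]
    rw [B.sinv_star, B.star_assoc, ← B.star_assoc, B.sinv_star, B.se_star] at h3
    exact h3.symm
  have := congrArg (B.star a) h2
  rwa [B.star_sinv' a u, B.star_se] at this

lemma ce_eq_se : B.ce = B.se := by
  have h1 : B.circ B.ce B.se = B.ce := B.circ_se B.ce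
  have h2 : B.circ B.ce B.se = B.se := B.ce_circ B.se
  rw [← h1, h2]

lemma sinv_se : B.sinv B.se = B.se := by
  have := B.sinv_star B.se
  rwa [B.star_se] at this

def lam (a b : X) : X := B.star (B.sinv a) (B.circ a b)

lemma circ_eq_lam (a b : X) : B.circ a b = B.star a (B.lam a b) := (B.star_sinv' a _).symm

lemma lam_star (a b c : X) : B.lam a (B.star b c) = B.star (B.lam a b) (B.lam a c) := by
  unfold lam
  rw [B.distrib]
  simp [B.star_assoc]

lemma lam_se (a : X) : B.lam a B.se = B.se := by
  unfold lam
  rw [B.circ_se, B.sinv_star]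

lemma lam_sinv (a b : X) : B.lam a (B.sinv b) = B.sinv (B.lam a b) := by
  apply B.inv_right
  rw [← B.lam_star, B.star_sinv, B.lam_se]

lemma lam_ce (c : X) : B.lam B.ce c = c := by
  unfold lam
  rw [B.ce_circ, B.ce_eq_se, B.sinv_se, B.se_star]

lemma lam_comp (a b c : X) : B.lam a (B.lam b c) = B.lam (B.circ a b) c := by
  have h1 : B.circ a (B.sinv b) = B.star a (B.star (B.sinv (B.circ a b)) a) := by
    rw [B.circ_eq_lam a (B.sinv b), B.lam_sinv]
    unfold lam
    rw [B.sinv_star_rev, B.sinv_sinv]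
  unfold lam
  rw [B.distrib, h1, B.circ_assoc]
  simp [B.star_assoc, B.sinv_star', B.star_sinv', B.sinv_star, B.star_sinv, B.se_star, B.star_se]

lemma lam_lam_cinv (a c : X) : B.lam a (B.lam (B.cinv a) c) = c := by
  rw [B.lam_comp, B.circ_cinv, B.lam_ce]

lemma lam_cinv_self (a : X) : B.lam a (B.cinv a) = B.sinv a := by
  unfold lam
  rw [B.circ_cinv, B.ce_eq_se, B.star_se]

lemma lam_self_cinv (a : X) : B.lam (B.cinv a) a = B.sinv (B.cinv a) := by
  unfold lam
  rw [B.cinv_circ, B.ce_eq_se, B.star_se]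

lemma tri_eq (x y : X) :
    B.tri x y = B.star (B.cinv y) (B.star (B.lam (B.cinv y) x) (B.sinv (B.cinv y))) := by
  unfold tri
  rw [B.circ_eq_lam, B.lam_star, B.lam_self_cinv]

lemma aux (x u v : X) :
    B.tri (B.tri x u) (B.circ (B.cinv u) v)
      = B.star (B.cinv v) (B.star (B.lam (B.cinv v) x) (B.sinv (B.cinv v))) := by
  have hQ : B.cinv (B.circ (B.cinv u) v) = B.circ (B.cinv v) u := by
    rw [B.cinv_circ_rev, B.cinv_cinv]
  have hlam : B.lam u (B.tri x u) = B.star (B.sinv u) (B.star x u) := by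
    rw [B.tri_eq x u, B.lam_star, B.lam_star, B.lam_cinv_self, B.lam_lam_cinv, B.lam_sinv,
      B.lam_cinv_self, B.sinv_sinv]
  rw [B.tri_eq (B.tri x u), hQ, ← B.lam_comp, hlam, B.circ_eq_lam (B.cinv v) u,
    B.lam_star, B.lam_star, B.lam_sinv]
  simp [B.star_assoc, B.sinv_star', B.star_sinv', B.sinv_star, B.star_sinv, B.sinv_star_rev,
    B.se_star, B.star_se]

end SkewBrace

theorem skewBrace_first_exchange {X : Type*} (B : SkewBrace X) (x y z : X) :
    B.tri (B.tri x y) (B.tri z y) = B.tri (B.tri x z) (B.ov y z) := by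
  have h1 : B.tri z y = B.circ (B.cinv y) (B.star z y) := rfl
  have h2 : B.ov y z = B.circ (B.cinv z) (B.star z y) := rfl
  rw [h1, h2, B.aux x y (B.star z y), B.aux x z (B.star z y)]
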